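/- Let G₁ and G₂ be finite simple graphs on vertex types V₁ and V₂, and let G be their fully disconnected disjoint union: the graph on V₁ ⊕ V₂ in which inl a is adjacent to inl b iff a and b are adjacent in G₁, inr a is adjacent to inr b iff a and b are adjacent in G₂, and no vertex inl a is adjacent to any vertex inr b. If G₁ and G₂ are ħ-perfect, then G is ħ-perfect. -/

import Mathlib

open Matrix

/-- A realization of the graph `G` in dimension `d`: a family of Hermitian involutions that
anticommute on edges and commute on non-edges. -/
def IsRealization {V : Type*} (G : SimpleGraph V) (d : ℕ)
    (S : V → Matrix (Fin d) (Fin d) ℂ) : Prop :=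
  (∀ i, (S i).IsHermitian) ∧ (∀ i, S i * S i = 1) ∧
    (∀ i j, G.Adj i j → S i * S j = -(S j * S i)) ∧
    (∀ i j, i ≠ j → ¬G.Adj i j → S i * S j = S j * S i)

/-- The (real) expectation value `ψᴴ A ψ` of a matrix `A` at a vector `ψ`. -/
noncomputable def expectation {d : ℕ} (A : Matrix (Fin d) (Fin d) ℂ) (ψ : Fin d → ℂ) : ℝ :=
  (star ψ ⬝ᵥ (A *ᵥ ψ)).re

/-- The beta value of a realization: supremum over unit vectors of the weighted sum of squared
expectations. -/
noncomputable def betaVal {V : Type*} [Fintype V] {d : ℕ}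
    (S : V → Matrix (Fin d) (Fin d) ℂ) (w : V → ℝ) : ℝ :=
  sSup {r : ℝ | ∃ ψ : Fin d → ℂ, star ψ ⬝ᵥ ψ = 1 ∧
    r = ∑ i, w i * (expectation (S i) ψ) ^ 2}

/-- A finite set of vertices is independent if no two of its members are adjacent. -/
def IsIndepSet {V : Type*} (G : SimpleGraph V) (I : Finset V) : Prop :=
  ∀ a ∈ I, ∀ b ∈ I, ¬G.Adj a b

/-- The weighted independence number. -/
noncomputable def alphaW {V : Type*} [Fintype V] (G : SimpleGraph V) (w : V → ℝ) : ℝ :=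
  sSup {r : ℝ | ∃ I : Finset V, IsIndepSet G I ∧ r = ∑ i ∈ I, w i}

/-- A graph is ħ-perfect if for every realization and every nonnegative weight vector the beta
value equals the weighted independence number. -/
def HbarPerfect {V : Type*} [Fintype V] (G : SimpleGraph V) : Prop :=
  ∀ d : ℕ, 1 ≤ d → ∀ S : V → Matrix (Fin d) (Fin d) ℂ, IsRealization G d S →
    ∀ w : V → ℝ, (∀ i, 0 ≤ w i) → betaVal S w = alphaW G w

section Aux

open scoped ComplexOrder

lemma aux_dot_mulVec_self {d : ℕ} {A : Matrix (Fin d) (Fin d) ℂ}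
    (hA : A.IsHermitian) (hA2 : A * A = 1) (ψ : Fin d → ℂ) :
    star (A *ᵥ ψ) ⬝ᵥ (A *ᵥ ψ) = star ψ ⬝ᵥ ψ := by
  rw [star_mulVec, dotProduct_mulVec, vecMul_vecMul, hA.eq, hA2, vecMul_one]

lemma aux_expectation_sq_le_one {d : ℕ} {A : Matrix (Fin d) (Fin d) ℂ}
    (hA : A.IsHermitian) (hA2 : A * A = 1) {ψ : Fin d → ℂ}
    (hψ : star ψ ⬝ᵥ ψ = 1) : (expectation A ψ) ^ 2 ≤ 1 := by
  set x : EuclideanSpace ℂ (Fin d) := (WithLp.equiv 2 _).symm ψ with hx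
  set y : EuclideanSpace ℂ (Fin d) := (WithLp.equiv 2 _).symm (A *ᵥ ψ) with hy
  have hxy : (inner ℂ x y : ℂ) = star ψ ⬝ᵥ (A *ᵥ ψ) :=
    (EuclideanSpace.inner_toLp_toLp _ _).trans (dotProduct_comm _ _)
  have hxx : (inner ℂ x x : ℂ) = 1 := by
    rw [← hψ, dotProduct_comm]; rfl
  have hyy : (inner ℂ y y : ℂ) = 1 := by
    rw [← hψ, ← aux_dot_mulVec_self hA hA2, dotProduct_comm]; rfl
  have hnx : ‖x‖ = 1 := by
    have h := @inner_self_eq_norm_sq ℂ _ _ _ _ x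
    rw [hxx] at h; simp at h
    nlinarith [norm_nonneg x]
  have hny : ‖y‖ = 1 := by
    have h := @inner_self_eq_norm_sq ℂ _ _ _ _ y
    rw [hyy] at h; simp at h
    nlinarith [norm_nonneg y]
  have hcs : ‖(inner ℂ x y : ℂ)‖ ≤ 1 := by
    simpa [hnx, hny] using norm_inner_le_norm (𝕜 := ℂ) x y
  have habs : |(star ψ ⬝ᵥ (A *ᵥ ψ)).re| ≤ 1 := by
    rw [← hxy]
    exact le_trans (Complex.abs_re_le_norm _) hcs
  calc (expectation A ψ) ^ 2 = |(star ψ ⬝ᵥ (A *ᵥ ψ)).re| ^ 2 := by rw [sq_abs]; rfl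
    _ ≤ 1 ^ 2 := pow_le_pow_left₀ (abs_nonneg _) habs 2
    _ = 1 := one_pow 2

lemma aux_exists_common_eigvec {ι : Type*} [DecidableEq ι] {d : ℕ} (hd : 1 ≤ d)
    (S : ι → Matrix (Fin d) (Fin d) ℂ) (I : Finset ι)
    (hinv : ∀ i ∈ I, S i * S i = 1)
    (hcomm : ∀ i ∈ I, ∀ j ∈ I, S i * S j = S j * S i) :
    ∃ ψ : Fin d → ℂ, ψ ≠ 0 ∧ ∀ i ∈ I, S i *ᵥ ψ = ψ ∨ S i *ᵥ ψ = -ψ := by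
  induction I using Finset.induction with
  | empty =>
    refine ⟨Pi.single ⟨0, hd⟩ 1, ?_, by simp⟩
    intro h
    have := congrFun h ⟨0, hd⟩
    simp at this
  | @insert j I hj ih =>
    obtain ⟨ψ, hne, hev⟩ := ih (fun i hi => hinv i (Finset.mem_insert_of_mem hi))
      (fun i hi k hk => hcomm i (Finset.mem_insert_of_mem hi) k (Finset.mem_insert_of_mem hk))
    by_cases hφ : ψ + S j *ᵥ ψ = 0
    · refine ⟨ψ, hne, ?_⟩
      intro i hi
      rcases Finset.mem_insert.mp hi with rfl | hi
      · right; linear_combination (norm := module) hφ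
      · exact hev i hi
    · refine ⟨ψ + S j *ᵥ ψ, hφ, ?_⟩
      intro i hi
      have hjj : S j *ᵥ (ψ + S j *ᵥ ψ) = ψ + S j *ᵥ ψ := by
        rw [mulVec_add, mulVec_mulVec, hinv j (Finset.mem_insert_self j I), one_mulVec]
        exact add_comm _ _
      rcases Finset.mem_insert.mp hi with rfl | hi
      · left; exact hjj
      · have hc : S i *ᵥ (S j *ᵥ ψ) = S j *ᵥ (S i *ᵥ ψ) := by
          rw [mulVec_mulVec, mulVec_mulVec,
            hcomm i (Finset.mem_insert_of_mem hi) j (Finset.mem_insert_self j I)]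
        rcases hev i hi with h | h
        · left; rw [mulVec_add, hc, h]
        · right; rw [mulVec_add, hc, h, mulVec_neg]; module

lemma aux_exists_unit_scale {d : ℕ} {ψ : Fin d → ℂ} (hne : ψ ≠ 0) :
    ∃ c : ℝ, 0 < c ∧ star ((c:ℂ) • ψ) ⬝ᵥ ((c:ℂ) • ψ) = 1 := by
  have hpos : (0:ℂ) < star ψ ⬝ᵥ ψ := dotProduct_star_self_pos_iff.mpr hne
  rw [Complex.lt_def] at hpos
  set r : ℝ := (star ψ ⬝ᵥ ψ).re with hr
  have hrpos : 0 < r := by simpa using hpos.1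
  have him : (star ψ ⬝ᵥ ψ).im = 0 := hpos.2.symm
  have hψeq : star ψ ⬝ᵥ ψ = (r : ℂ) := Complex.ext_iff.mpr ⟨rfl, by simpa using him⟩
  have hs : Real.sqrt r ≠ 0 := by positivity
  refine ⟨(Real.sqrt r)⁻¹, by positivity, ?_⟩
  have hst : star (((Real.sqrt r)⁻¹ : ℝ) : ℂ) = (((Real.sqrt r)⁻¹ : ℝ) : ℂ) := by
    simp [Complex.star_def, Complex.conj_ofReal]
  rw [star_smul, hst, smul_dotProduct, dotProduct_smul, hψeq, smul_eq_mul, smul_eq_mul]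
  norm_cast
  rw [← Real.mul_self_sqrt hrpos.le]
  field_simp
  rw [Real.sqrt_sq (Real.sqrt_nonneg _)]

/-- On an eigenvector of eigenvalue `±1` of a unit vector, the expectation squared is `1`. -/
lemma aux_expectation_sq_eq_one {d : ℕ} {A : Matrix (Fin d) (Fin d) ℂ} {ψ : Fin d → ℂ}
    (hψ : star ψ ⬝ᵥ ψ = 1) (h : A *ᵥ ψ = ψ ∨ A *ᵥ ψ = -ψ) :
    (expectation A ψ) ^ 2 = 1 := by
  rcases h with h | h
  · rw [expectation, h, hψ]; norm_num
  · rw [expectation, h, dotProduct_neg, hψ]; norm_num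

/-- The set appearing in `betaVal` is bounded above by the total weight. -/
lemma aux_betaSet_bddAbove {V : Type*} [Fintype V] {G : SimpleGraph V} {d : ℕ}
    {S : V → Matrix (Fin d) (Fin d) ℂ} (hS : IsRealization G d S)
    {w : V → ℝ} (hw : ∀ i, 0 ≤ w i) :
    BddAbove {r : ℝ | ∃ ψ : Fin d → ℂ, star ψ ⬝ᵥ ψ = 1 ∧
      r = ∑ i, w i * (expectation (S i) ψ) ^ 2} := by
  refine ⟨∑ i, w i, ?_⟩
  rintro r ⟨ψ, hψ, rfl⟩
  calc ∑ i, w i * (expectation (S i) ψ) ^ 2 ≤ ∑ i, w i * 1 := by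
        refine Finset.sum_le_sum fun i _ => ?_
        exact mul_le_mul_of_nonneg_left (aux_expectation_sq_le_one (hS.1 i) (hS.2.1 i) hψ) (hw i)
    _ = ∑ i, w i := by simp

lemma aux_alphaSet_finite {V : Type*} [Fintype V] (G : SimpleGraph V) (w : V → ℝ) :
    {r : ℝ | ∃ I : Finset V, IsIndepSet G I ∧ r = ∑ i ∈ I, w i}.Finite := by
  refine (Set.finite_range (fun I : Finset V => ∑ i ∈ I, w i)).subset ?_
  rintro r ⟨I, -, rfl⟩
  exact ⟨I, rfl⟩

lemma aux_alphaSet_nonempty {V : Type*} [Fintype V] (G : SimpleGraph V) (w : V → ℝ) :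
    {r : ℝ | ∃ I : Finset V, IsIndepSet G I ∧ r = ∑ i ∈ I, w i}.Nonempty :=
  ⟨0, ∅, fun a ha => absurd ha (Finset.notMem_empty a), by simp⟩

lemma aux_alphaW_mem {V : Type*} [Fintype V] (G : SimpleGraph V) (w : V → ℝ) :
    ∃ I : Finset V, IsIndepSet G I ∧ alphaW G w = ∑ i ∈ I, w i :=
  (aux_alphaSet_nonempty G w).csSup_mem (aux_alphaSet_finite G w)

/-- The lower bound: for every realization, the weighted independence number bounds the beta
value from below. -/
lemma aux_alphaW_le_betaVal {V : Type*} [Fintype V] {G : SimpleGraph V} {d : ℕ} (hd : 1 ≤ d)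
    {S : V → Matrix (Fin d) (Fin d) ℂ} (hS : IsRealization G d S)
    {w : V → ℝ} (hw : ∀ i, 0 ≤ w i) :
    alphaW G w ≤ betaVal S w := by
  classical
  refine csSup_le (aux_alphaSet_nonempty G w) ?_
  rintro r ⟨I, hI, rfl⟩
  obtain ⟨ψ₀, hne, hev₀⟩ := aux_exists_common_eigvec hd S I (fun i _ => hS.2.1 i)
    (fun i hi j hj => by
      by_cases hij : i = j
      · subst hij; rfl
      · exact hS.2.2.2 i j hij (hI i hi j hj))
  obtain ⟨c, hc, hunit⟩ := aux_exists_unit_scale hne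
  set ψ : Fin d → ℂ := (c : ℂ) • ψ₀ with hψdef
  have hev : ∀ i ∈ I, S i *ᵥ ψ = ψ ∨ S i *ᵥ ψ = -ψ := by
    intro i hi
    rcases hev₀ i hi with h | h
    · left; rw [hψdef, mulVec_smul, h]
    · right; rw [hψdef, mulVec_smul, h, smul_neg]
  have hmem : (∑ i, w i * (expectation (S i) ψ) ^ 2) ∈
      {r : ℝ | ∃ ψ : Fin d → ℂ, star ψ ⬝ᵥ ψ = 1 ∧
        r = ∑ i, w i * (expectation (S i) ψ) ^ 2} := ⟨ψ, hunit, rfl⟩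
  have hle : ∑ i ∈ I, w i ≤ ∑ i, w i * (expectation (S i) ψ) ^ 2 := by
    calc ∑ i ∈ I, w i = ∑ i ∈ I, w i * (expectation (S i) ψ) ^ 2 := by
          refine Finset.sum_congr rfl fun i hi => ?_
          rw [aux_expectation_sq_eq_one hunit (hev i hi), mul_one]
      _ ≤ ∑ i, w i * (expectation (S i) ψ) ^ 2 := by
          refine Finset.sum_le_sum_of_subset_of_nonneg (Finset.subset_univ I) ?_
          intro i _ _
          exact mul_nonneg (hw i) (sq_nonneg _)
  exact hle.trans (le_csSup (aux_betaSet_bddAbove hS hw) hmem)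

end Aux

/-- The fully disconnected disjoint union of two ħ-perfect graphs is ħ-perfect. -/
theorem stmt_3 {V₁ V₂ : Type*} [Fintype V₁] [Fintype V₂]
    (G₁ : SimpleGraph V₁) (G₂ : SimpleGraph V₂) (G : SimpleGraph (V₁ ⊕ V₂))
    (hll : ∀ a b, G.Adj (Sum.inl a) (Sum.inl b) ↔ G₁.Adj a b)
    (hrr : ∀ a b, G.Adj (Sum.inr a) (Sum.inr b) ↔ G₂.Adj a b)
    (hlr : ∀ a b, ¬G.Adj (Sum.inl a) (Sum.inr b))
    (h₁ : HbarPerfect G₁) (h₂ : HbarPerfect G₂) :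
    HbarPerfect G := by
  intro d hd S hS w hw
  classical
  -- the restricted realizations
  set S₁ : V₁ → Matrix (Fin d) (Fin d) ℂ := fun a => S (Sum.inl a) with hS₁def
  set S₂ : V₂ → Matrix (Fin d) (Fin d) ℂ := fun a => S (Sum.inr a) with hS₂def
  set w₁ : V₁ → ℝ := fun a => w (Sum.inl a) with hw₁def
  set w₂ : V₂ → ℝ := fun a => w (Sum.inr a) with hw₂def
  have hS₁ : IsRealization G₁ d S₁ := by
    refine ⟨fun i => hS.1 _, fun i => hS.2.1 _, fun i j hij => ?_, fun i j hij hnadj => ?_⟩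
    · exact hS.2.2.1 _ _ ((hll i j).mpr hij)
    · exact hS.2.2.2 _ _ (fun h => hij (Sum.inl_injective h))
        (fun h => hnadj ((hll i j).mp h))
  have hS₂ : IsRealization G₂ d S₂ := by
    refine ⟨fun i => hS.1 _, fun i => hS.2.1 _, fun i j hij => ?_, fun i j hij hnadj => ?_⟩
    · exact hS.2.2.1 _ _ ((hrr i j).mpr hij)
    · exact hS.2.2.2 _ _ (fun h => hij (Sum.inr_injective h))
        (fun h => hnadj ((hrr i j).mp h))
  have hw₁ : ∀ i, 0 ≤ w₁ i := fun i => hw _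
  have hw₂ : ∀ i, 0 ≤ w₂ i := fun i => hw _
  have hb₁ : betaVal S₁ w₁ = alphaW G₁ w₁ := h₁ d hd S₁ hS₁ w₁ hw₁
  have hb₂ : betaVal S₂ w₂ = alphaW G₂ w₂ := h₂ d hd S₂ hS₂ w₂ hw₂
  -- α(G₁) + α(G₂) ≤ α(G)
  obtain ⟨I₁, hI₁, hα₁⟩ := aux_alphaW_mem G₁ w₁
  obtain ⟨I₂, hI₂, hα₂⟩ := aux_alphaW_mem G₂ w₂
  set I : Finset (V₁ ⊕ V₂) :=
    I₁.map ⟨Sum.inl, Sum.inl_injective⟩ ∪ I₂.map ⟨Sum.inr, Sum.inr_injective⟩ with hIdef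
  have hIindep : IsIndepSet G I := by
    intro a ha b hb
    rw [hIdef, Finset.mem_union] at ha hb
    rcases ha with ha | ha <;> rcases hb with hb | hb <;>
      simp only [Finset.mem_map, Function.Embedding.coeFn_mk] at ha hb
    · obtain ⟨a', ha', rfl⟩ := ha; obtain ⟨b', hb', rfl⟩ := hb
      rw [hll]; exact hI₁ a' ha' b' hb'
    · obtain ⟨a', ha', rfl⟩ := ha; obtain ⟨b', hb', rfl⟩ := hb
      exact hlr a' b'
    · obtain ⟨a', ha', rfl⟩ := ha; obtain ⟨b', hb', rfl⟩ := hb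
      intro h
      exact hlr b' a' h.symm
    · obtain ⟨a', ha', rfl⟩ := ha; obtain ⟨b', hb', rfl⟩ := hb
      rw [hrr]; exact hI₂ a' ha' b' hb'
  have hIsum : ∑ i ∈ I, w i = ∑ i ∈ I₁, w₁ i + ∑ i ∈ I₂, w₂ i := by
    rw [hIdef, Finset.sum_union, Finset.sum_map, Finset.sum_map]
    · rfl
    · rw [Finset.disjoint_left]
      rintro a ha hb
      simp only [Finset.mem_map, Function.Embedding.coeFn_mk] at ha hb
      obtain ⟨a', -, rfl⟩ := ha
      obtain ⟨b', -, h⟩ := hb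
      cases h
  have hαle : alphaW G₁ w₁ + alphaW G₂ w₂ ≤ alphaW G w := by
    rw [hα₁, hα₂, ← hIsum]
    exact le_csSup ((aux_alphaSet_finite G w).bddAbove) ⟨I, hIindep, rfl⟩
  -- β(S) ≤ β(S₁) + β(S₂)
  have hβle : betaVal S w ≤ betaVal S₁ w₁ + betaVal S₂ w₂ := by
    refine csSup_le ?_ ?_
    · refine ⟨∑ i, w i * (expectation (S i) (Pi.single ⟨0, hd⟩ 1)) ^ 2,
        Pi.single ⟨0, hd⟩ 1, ?_, rfl⟩
      simp [dotProduct, Pi.single_apply, apply_ite]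
    · rintro r ⟨ψ, hψ, rfl⟩
      rw [Fintype.sum_sum_type]
      have h1 : ∑ a, w (Sum.inl a) * (expectation (S (Sum.inl a)) ψ) ^ 2 ≤ betaVal S₁ w₁ :=
        le_csSup (aux_betaSet_bddAbove hS₁ hw₁) ⟨ψ, hψ, rfl⟩
      have h2 : ∑ a, w (Sum.inr a) * (expectation (S (Sum.inr a)) ψ) ^ 2 ≤ betaVal S₂ w₂ :=
        le_csSup (aux_betaSet_bddAbove hS₂ hw₂) ⟨ψ, hψ, rfl⟩
      exact add_le_add h1 h2
  have hupper : betaVal S w ≤ alphaW G w := by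
    calc betaVal S w ≤ betaVal S₁ w₁ + betaVal S₂ w₂ := hβle
      _ = alphaW G₁ w₁ + alphaW G₂ w₂ := by rw [hb₁, hb₂]
      _ ≤ alphaW G w := hαle
  exact le_antisymm hupper (aux_alphaW_le_betaVal hd hS hw)
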